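/- arXiv:1304.5849 — 4 statements merged into one kernel-verified Lean document; each statement's English description precedes it below -/
import Mathlib

section
/- (Small universe lemma) Let P and Q be finite posets with k = |P|, and suppose f is a witness for P ⪯ Q. Then there exists a subset Q⁰ of the elements of Q with |Q⁰| ≤ 2^k · k such that every partial function f' from the elements of Q to the elements of P that agrees with f on Q⁰ (i.e., f'(q) = f(q) for all q ∈ Q⁰, where f is defined on all of Q⁰) is also a witness for P ⪯ Q. -/
/-- A chain in a poset: a finite sequence `(v_1, …, v_n)` with `v_i < v_j` for `i < j`,
modeled as a strictly increasing list. -/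
def IsPosetChain {α : Type*} [PartialOrder α] (l : List α) : Prop :=
  l.Chain' (· < ·)

/-- A partial function `f : Q ⇀ P` (modeled as `Q → Option P`) is a witness for `P ⪯ Q`:
for every chain `(c_1, …, c_n)` in `P` there is a chain `(c'_1, …, c'_n)` in `Q`
with `f (c'_i) = c_i` for all `i`. -/
def IsChainMinorWitness {P Q : Type*} [PartialOrder P] [PartialOrder Q]
    (f : Q → Option P) : Prop :=
  ∀ c : List P, IsPosetChain c →
    ∃ c' : List Q, IsPosetChain c' ∧ c'.map f = c.map some

/-- `P` is a chain minor of `Q` if there is a witness. -/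
def ChainMinor (P Q : Type*) [PartialOrder P] [PartialOrder Q] : Prop :=
  ∃ f : Q → Option P, IsChainMinorWitness f

lemma chain_eq_of_toFinset_eq {P : Type*} [PartialOrder P] [DecidableEq P]
    {c c' : List P} (hc : IsPosetChain c) (hc' : IsPosetChain c')
    (h : c.toFinset = c'.toFinset) : c = c' := by
  have p1 : c.Pairwise (· < ·) := List.isChain_iff_pairwise.mp hc
  have p2 : c'.Pairwise (· < ·) := List.isChain_iff_pairwise.mp hc'
  have n1 : c.Nodup := p1.imp fun h => ne_of_lt h
  have n2 : c'.Nodup := p2.imp fun h => ne_of_lt h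
  exact List.Perm.eq_of_pairwise (fun _ _ _ _ h1 h2 => absurd (h1.trans h2) (lt_irrefl _)) p1 p2 (List.perm_of_nodup_nodup_toFinset_eq n1 n2 h)

/-- Small universe lemma: if `f` is a witness for `P ⪯ Q` and `k = |P|`, then there is a
set `Q⁰` of at most `2 ^ k * k` elements of `Q` on which `f` is defined, such that every
partial function `f'` agreeing with `f` on `Q⁰` is also a witness for `P ⪯ Q`. -/
theorem small_universe {P Q : Type*} [Fintype P] [PartialOrder P]
    [Fintype Q] [PartialOrder Q] (k : ℕ) (hk : k = Fintype.card P)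
    (f : Q → Option P) (hf : IsChainMinorWitness f) :
    ∃ Q0 : Finset Q, Q0.card ≤ 2 ^ k * k
      ∧ (∀ q ∈ Q0, (f q).isSome)
      ∧ ∀ f' : Q → Option P, (∀ q ∈ Q0, f' q = f q) → IsChainMinorWitness f' := by
  classical
  have key : ∀ s : Finset P, ∃ w : List Q, w.length ≤ k ∧ (∀ q ∈ w, (f q).isSome) ∧
      ∀ c : List P, IsPosetChain c → c.toFinset = s →
        IsPosetChain w ∧ w.map f = c.map some := by
    intro s
    by_cases h : ∃ c : List P, IsPosetChain c ∧ c.toFinset = s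
    · obtain ⟨c, hc, hcs⟩ := h
      obtain ⟨w, hw1, hw2⟩ := hf c hc
      have hnodup : c.Nodup :=
        (List.isChain_iff_pairwise.mp hc).imp fun h => ne_of_lt h
      have hlen : w.length = c.length := by
        have := congrArg List.length hw2
        simpa using this
      have hclen : c.length ≤ k := by
        rw [hk]
        calc c.length = c.toFinset.card := (List.toFinset_card_of_nodup hnodup).symm
        _ ≤ Fintype.card P := Finset.card_le_univ _
      refine ⟨w, hlen ▸ hclen, ?_, ?_⟩
      · intro q hq
        have : f q ∈ c.map some := by
          rw [← hw2]; exact List.mem_map_of_mem hq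
        obtain ⟨p, -, hp⟩ := List.mem_map.mp this
        rw [← hp]; rfl
      · intro c2 hc2 hc2s
        have : c2 = c := chain_eq_of_toFinset_eq hc2 hc (hc2s.trans hcs.symm)
        subst this
        exact ⟨hw1, hw2⟩
    · exact ⟨[], by simp, by simp, fun c hc hcs => absurd ⟨c, hc, hcs⟩ h⟩
  choose w hwlen hwsome hw using key
  refine ⟨Finset.univ.biUnion (fun s : Finset P => (w s).toFinset), ?_, ?_, ?_⟩
  · calc (Finset.univ.biUnion (fun s : Finset P => (w s).toFinset)).card
        ≤ ∑ s : Finset P, (w s).toFinset.card := Finset.card_biUnion_le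
      _ ≤ ∑ s : Finset P, k := by
          refine Finset.sum_le_sum fun s _ => ?_
          exact le_trans (List.toFinset_card_le _) (hwlen s)
      _ = 2 ^ k * k := by
          rw [Finset.sum_const, Finset.card_univ, Fintype.card_finset, hk, smul_eq_mul]
  · intro q hq
    obtain ⟨s, -, hqs⟩ := Finset.mem_biUnion.mp hq
    exact hwsome s q (List.mem_toFinset.mp hqs)
  · intro f' hf' c hc
    obtain ⟨hw1, hw2⟩ := hw c.toFinset c hc rfl
    refine ⟨w c.toFinset, hw1, ?_⟩
    rw [← hw2]
    apply List.map_congr_left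
    intro q hq
    exact hf' q (Finset.mem_biUnion.mpr ⟨c.toFinset, Finset.mem_univ _, List.mem_toFinset.mpr hq⟩)
end

section
/- Let P and Q be finite posets with k = |P| ≥ 1 and P ⪯ Q, and let N = k^(2^k · k). If g_1, ..., g_N are independent uniformly random functions from the elements of Q to the elements of P, then the probability that none of g_1, ..., g_N is a witness for P ⪯ Q is at most (1 − k^(−2^k·k))^N, which is at most e^(−1). -/
/-- A total function `g : Q → P` is a witness for `P ⪯ Q`: for every chain
`(c_1, …, c_n)` in `P` there is a chain `(c'_1, …, c'_n)` in `Q` with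
`g (c'_i) = c_i` for all `i`. -/
def IsTotalChainMinorWitness {P Q : Type*} [PartialOrder P] [PartialOrder Q]
    (g : Q → P) : Prop :=
  ∀ c : List P, IsPosetChain c →
    ∃ c' : List Q, IsPosetChain c' ∧ c'.map g = c


lemma IsPosetChain.pairwise {α : Type*} [PartialOrder α] {l : List α}
    (h : IsPosetChain l) : l.Pairwise (· < ·) :=
  List.isChain_iff_pairwise.mp h

lemma IsPosetChain.nodup {α : Type*} [PartialOrder α] {l : List α}
    (h : IsPosetChain l) : l.Nodup :=
  h.pairwise.imp ne_of_lt

lemma chain_toFinset_injOn {α : Type*} [PartialOrder α] [DecidableEq α]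
    {l₁ l₂ : List α} (h₁ : IsPosetChain l₁) (h₂ : IsPosetChain l₂)
    (he : l₁.toFinset = l₂.toFinset) : l₁ = l₂ := by
  haveI : IsAntisymm α (· < ·) := ⟨fun a b h1 h2 => (lt_asymm h1 h2).elim⟩
  exact List.Perm.eq_of_pairwise' h₁.pairwise h₂.pairwise
    (List.perm_of_nodup_nodup_toFinset_eq h₁.nodup h₂.nodup he)

/-- Let `k = |P| ≥ 1`, `P ⪯ Q`, and `N = k ^ (2 ^ k * k)`. The probability that none of
`N` independent uniformly random functions `g : Q → P` is a witness for `P ⪯ Q` — which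
equals `(m / k ^ |Q|) ^ N` where `m` is the number of non-witness functions — is at most
`(1 - k ^ (-2 ^ k * k)) ^ N`, which in turn is at most `e ^ (-1)`. -/
theorem error_probability_bound {P Q : Type*} [Fintype P] [PartialOrder P]
    [Fintype Q] [PartialOrder Q] (k : ℕ) (hk : k = Fintype.card P) (hk1 : 1 ≤ k)
    (h : ChainMinor P Q) (N : ℕ) (hN : N = k ^ (2 ^ k * k)) :
    ((Nat.card {g : Q → P // ¬ IsTotalChainMinorWitness g} : ℝ)
        / (k : ℝ) ^ Fintype.card Q) ^ N
      ≤ (1 - (k : ℝ) ^ (-((2 ^ k * k : ℕ) : ℤ))) ^ N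
    ∧ (1 - (k : ℝ) ^ (-((2 ^ k * k : ℕ) : ℤ))) ^ N ≤ Real.exp (-1) := by
  classical
  obtain ⟨f, hf⟩ := h
  have hPcard : 0 < Fintype.card P := by omega
  obtain ⟨p0⟩ : Nonempty P := Fintype.card_pos_iff.mp hPcard
  set E : ℕ := 2 ^ k * k with hE
  -- chosen preimage chains
  let ch : List P → List Q := fun c => if hc : IsPosetChain c then (hf c hc).choose else []
  have hch1 : ∀ c, IsPosetChain c → IsPosetChain (ch c) := by
    intro c hc; simp only [ch, dif_pos hc]; exact (hf c hc).choose_spec.1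
  have hch2 : ∀ c, IsPosetChain c → (ch c).map f = c.map some := by
    intro c hc; simp only [ch, dif_pos hc]; exact (hf c hc).choose_spec.2
  -- chain lengths
  have hlen : ∀ c : List P, IsPosetChain c → c.length ≤ k := by
    intro c hc; rw [hk]; exact hc.nodup.length_le_card
  -- the finite set of chains of P
  have hCfin : {l : List P | IsPosetChain l}.Finite :=
    (List.finite_length_le P k).subset fun l hl => hlen l hl
  set Ct : Finset (List P) := hCfin.toFinset with hCt
  have hCtcard : Ct.card ≤ 2 ^ k := by
    calc Ct.card ≤ (Finset.univ : Finset (Finset P)).card := by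
          apply Finset.card_le_card_of_injOn (fun l => l.toFinset)
          · intro l _; exact Finset.mem_univ _
          · intro l₁ h₁ l₂ h₂ he
            simp only [hCt, Finset.mem_coe, Set.Finite.mem_toFinset, Set.mem_setOf_eq] at h₁ h₂
            exact chain_toFinset_injOn h₁ h₂ he
      _ = 2 ^ k := by rw [Finset.card_univ, Fintype.card_finset, hk]
  set S : Finset Q := Ct.biUnion (fun c => (ch c).toFinset) with hS
  have hScard : S.card ≤ E := by
    calc S.card ≤ ∑ c ∈ Ct, (ch c).toFinset.card := Finset.card_biUnion_le
      _ ≤ ∑ _c ∈ Ct, k := by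
          apply Finset.sum_le_sum
          intro c hc
          rw [hCt, Set.Finite.mem_toFinset] at hc
          calc (ch c).toFinset.card ≤ (ch c).length := List.toFinset_card_le _
            _ = c.length := by
                have := congrArg List.length (hch2 c hc)
                simpa using this
            _ ≤ k := hlen c hc
      _ = Ct.card * k := by rw [Finset.sum_const, smul_eq_mul]
      _ ≤ 2 ^ k * k := Nat.mul_le_mul_right _ hCtcard
  set g0 : Q → P := fun q => (f q).getD p0 with hg0
  -- any g agreeing with g0 on S is a total witness
  have hwit : ∀ g : Q → P, (∀ q ∈ S, g q = g0 q) → IsTotalChainMinorWitness g := by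
    intro g hg c hc
    refine ⟨ch c, hch1 c hc, ?_⟩
    have hmem : ∀ q ∈ ch c, q ∈ S := by
      intro q hq
      rw [hS]
      exact Finset.mem_biUnion.mpr ⟨c, by rw [hCt, Set.Finite.mem_toFinset]; exact hc,
        List.mem_toFinset.mpr hq⟩
    have h1 : (ch c).map g = (ch c).map g0 :=
      List.map_congr_left fun q hq => hg q (hmem q hq)
    have h2 : (ch c).map g0 = c := by
      have h' : ((ch c).map f).map (fun o => o.getD p0) = c := by
        rw [hch2 c hc, List.map_map]; simp [Function.comp_def]
      rw [List.map_map] at h'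
      have hfun : ((fun o : Option P => o.getD p0) ∘ f) = g0 := by
        funext q; simp [hg0, Function.comp]
      rwa [hfun] at h'
    rw [h1, h2]
  -- counting
  set cq : ℕ := Fintype.card Q with hcq
  have hA : S.card ≤ cq := by rw [hcq]; exact Finset.card_le_univ S
  have hcount : k ^ (cq - S.card) ≤ Fintype.card {g : Q → P // IsTotalChainMinorWitness g} := by
    have hinj : Function.Injective
        (fun (h : (↥(Sᶜ : Finset Q)) → P) =>
          (⟨fun q => if hq : q ∈ S then g0 q else h ⟨q, Finset.mem_compl.mpr hq⟩,
            hwit _ (fun q hq => dif_pos hq)⟩ :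
            {g : Q → P // IsTotalChainMinorWitness g})) := by
      intro h1 h2 he
      funext q
      obtain ⟨q, hq⟩ := q
      have hq' : q ∉ S := Finset.mem_compl.mp hq
      have := congrArg (fun g => g.1 q) he
      simpa [dif_neg hq'] using this
    calc k ^ (cq - S.card) = Fintype.card ((↥(Sᶜ : Finset Q)) → P) := by
          rw [Fintype.card_fun, Fintype.card_coe, Finset.card_compl, hk, hcq]
      _ ≤ _ := Fintype.card_le_of_injective _ hinj
  have hm : Nat.card {g : Q → P // ¬ IsTotalChainMinorWitness g} ≤ k ^ cq - k ^ (cq - S.card) := by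
    rw [Nat.card_eq_fintype_card, Fintype.card_subtype_compl]
    have : Fintype.card (Q → P) = k ^ cq := by rw [Fintype.card_fun, hk, hcq]
    omega
  -- real arithmetic
  have hk0 : (0:ℝ) < (k:ℝ) := by positivity
  have hk1' : (1:ℝ) ≤ (k:ℝ) := by exact_mod_cast hk1
  have hkcq : (0:ℝ) < (k:ℝ) ^ cq := by positivity
  have key : (Nat.card {g : Q → P // ¬ IsTotalChainMinorWitness g} : ℝ) / (k : ℝ) ^ cq
      ≤ 1 - (k : ℝ) ^ (-(E : ℤ)) := by
    have h1 : (Nat.card {g : Q → P // ¬ IsTotalChainMinorWitness g} : ℝ)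
        ≤ (k:ℝ) ^ cq - (k:ℝ) ^ (cq - S.card) := by
      have hle : k ^ (cq - S.card) ≤ k ^ cq := Nat.pow_le_pow_right hk1 (Nat.sub_le _ _)
      calc (Nat.card {g : Q → P // ¬ IsTotalChainMinorWitness g} : ℝ)
          ≤ ((k ^ cq - k ^ (cq - S.card) : ℕ) : ℝ) := by exact_mod_cast hm
        _ = (k:ℝ) ^ cq - (k:ℝ) ^ (cq - S.card) := by
            rw [Nat.cast_sub hle]; push_cast; ring
    have h2 : ((k:ℝ) ^ cq - (k:ℝ) ^ (cq - S.card)) / (k:ℝ) ^ cq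
        = 1 - (k : ℝ) ^ (-(S.card : ℤ)) := by
      have hq : (k:ℝ) ^ (cq - S.card) / (k:ℝ) ^ cq = ((k:ℝ) ^ S.card)⁻¹ := by
        rw [inv_eq_one_div, div_eq_div_iff (ne_of_gt hkcq) (by positivity : ((k:ℝ) ^ S.card) ≠ 0), one_mul, ← pow_add]
        congr 1
        omega
      rw [sub_div, div_self (ne_of_gt hkcq), zpow_neg, zpow_natCast, hq]
    have h3 : (k : ℝ) ^ (-(E : ℤ)) ≤ (k : ℝ) ^ (-(S.card : ℤ)) := by
      apply zpow_le_zpow_right₀ hk1'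
      omega
    calc (Nat.card {g : Q → P // ¬ IsTotalChainMinorWitness g} : ℝ) / (k : ℝ) ^ cq
        ≤ ((k:ℝ) ^ cq - (k:ℝ) ^ (cq - S.card)) / (k:ℝ) ^ cq := by gcongr
      _ = 1 - (k : ℝ) ^ (-(S.card : ℤ)) := h2
      _ ≤ 1 - (k : ℝ) ^ (-(E : ℤ)) := by linarith
  set x : ℝ := (k : ℝ) ^ (-(E : ℤ)) with hx
  have hx0 : 0 < x := by rw [hx]; positivity
  have hx1 : x ≤ 1 := by
    rw [hx]
    apply zpow_le_one_of_nonpos₀ hk1'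
    simp
  constructor
  · apply pow_le_pow_left₀ _ key
    apply div_nonneg (Nat.cast_nonneg _) (le_of_lt hkcq)
  · have h4 : 1 - x ≤ Real.exp (-x) := by
      have := Real.add_one_le_exp (-x)
      linarith
    have h5 : (1 - x) ^ N ≤ Real.exp (-x) ^ N := pow_le_pow_left₀ (by linarith) h4 N
    have h6 : Real.exp (-x) ^ N = Real.exp (-1) := by
      rw [← Real.exp_nat_mul]
      congr 1
      have hNx : (N : ℝ) * x = 1 := by
        rw [hN, hx]
        push_cast
        rw [← zpow_natCast (k:ℝ) E, ← zpow_add₀ (ne_of_gt hk0)]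
        simp
      rw [mul_neg, hNx]
    rw [← h6]
    exact h5
end

section
/- Every finite poset P with p elements and height at most q is a chain minor of 2^p · C_q, the poset consisting of 2^p pairwise incomparable (disjoint) chains, each on q elements. -/
/-- The poset `m·C_q`: the disjoint union of `m` chains, each on `q` elements.
Elements of different chains are incomparable. -/
def DisjointChains (m q : ℕ) : Type := Fin m × Fin q

instance (m q : ℕ) : PartialOrder (DisjointChains m q) where
  le x y := x.1 = y.1 ∧ x.2 ≤ y.2
  le_refl x := ⟨rfl, le_refl _⟩
  le_trans x y z h1 h2 := ⟨h1.1.trans h2.1, h1.2.trans h2.2⟩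
  le_antisymm x y h1 h2 := Prod.ext h1.1 (le_antisymm h1.2 h2.2)

lemma dc_lt {m q : ℕ} (k : Fin m) {i j : Fin q} (h : i < j) :
    @LT.lt (DisjointChains m q) Preorder.toLT (k, i) (k, j) := by
  erw [lt_iff_le_not_ge]
  refine ⟨⟨rfl, h.le⟩, fun hle => absurd hle.2 (not_le.2 h)⟩

lemma chain_unique {P : Type*} [PartialOrder P] [DecidableEq P] {l₁ l₂ : List P}
    (h₁ : IsPosetChain l₁) (h₂ : IsPosetChain l₂) (h : l₁.toFinset = l₂.toFinset) :
    l₁ = l₂ := by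
  classical
  haveI : Std.Antisymm (α := P) (· < ·) := ⟨fun a b h h' => absurd h' (lt_asymm h)⟩
  have s₁ : l₁.Pairwise (· < ·) := List.isChain_iff_pairwise.1 h₁
  have s₂ : l₂.Pairwise (· < ·) := List.isChain_iff_pairwise.1 h₂
  have n₁ : l₁.Nodup := s₁.imp ne_of_lt
  have n₂ : l₂.Nodup := s₂.imp ne_of_lt
  exact List.Perm.eq_of_pairwise' s₁ s₂
    (List.perm_of_nodup_nodup_toFinset_eq n₁ n₂ h)

/-- Every finite poset `P` with `p` elements and height at most `q` (every chain of `P`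
has at most `q` elements) is a chain minor of `2^p · C_q`, the disjoint union of `2^p`
chains, each on `q` elements. -/
theorem chainMinor_disjointChains (P : Type*) [Fintype P] [PartialOrder P]
    (p q : ℕ) (hp : p = Fintype.card P)
    (hheight : ∀ l : List P, IsPosetChain l → l.length ≤ q) :
    ChainMinor P (DisjointChains (2 ^ p) q) := by
  
  classical
  have card : Fintype.card (Finset P) = 2 ^ p := by rw [Fintype.card_finset, hp]
  let e : Finset P ≃ Fin (2 ^ p) := Fintype.equivFinOfCardEq card
  refine ⟨fun x =>
    if h : ∃ l : List P, IsPosetChain l ∧ l.toFinset = e.symm x.1 then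
      h.choose[x.2.1]? else none, ?_⟩
  intro c hc
  have hlen : c.length ≤ q := hheight c hc
  set k := e c.toFinset with hk
  refine ⟨List.ofFn (fun i : Fin c.length => ((k, i.castLE hlen) : DisjointChains (2 ^ p) q)),
    ?_, ?_⟩
  · rw [IsPosetChain, List.Chain', List.isChain_iff_pairwise]
    apply List.pairwise_ofFn.2
    intro i j hij
    exact dc_lt k (show i.castLE hlen < j.castLE hlen by simpa using hij)
  · erw [List.map_ofFn]
    conv_rhs => rw [← List.ofFn_get c, List.map_ofFn]
    congr 1
    funext i
    simp only [Function.comp_apply]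
    have hex : ∃ l : List P, IsPosetChain l ∧ l.toFinset = e.symm k := by
      exact ⟨c, hc, by simp [hk]⟩
    show (if h : ∃ l : List P, IsPosetChain l ∧ l.toFinset = e.symm k then
      h.choose[((Fin.castLE hlen i : Fin q) : ℕ)]? else none) = _
    rw [dif_pos hex]
    have : hex.choose = c := chain_unique hex.choose_spec.1 hc
      (by rw [hex.choose_spec.2, hk, Equiv.symm_apply_apply])
    rw [this]
    simp [List.getElem?_eq_getElem, i.isLt]
end

section
/- (Correctness of the witness-checking dynamic program, one chain) Let P and Q be finite posets, let f be a partial function from the elements of Q to the elements of P, and let (c_1, ..., c_p) be a chain in P. For q an element of Q, define maxc(q) to be the largest j ≥ 0 such that there exists a chain (c'_1, ..., c'_j) in Q with all c'_i ≤ q and f(c'_i) = c_i for all i. Then maxc satisfies the recurrence: maxc(q) = j if max over all v < q of maxc(v) equals j − 1 and f(q) = c_j, and maxc(q) = max over all v < q of maxc(v) otherwise (with the convention that the maximum over the empty set is 0). Consequently, there exists a chain (c'_1, ..., c'_p) in Q with f(c'_i) = c_i for all i if and only if maxc(q) = p for some element q of Q. -/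
/-- Correctness of the witness-checking dynamic program, for one chain `(c_1, …, c_p)`
of `P`.  For `q : Q`, `maxc q` is the largest `j ≥ 0` such that there is a chain
`(c'_1, …, c'_j)` in `Q` with all `c'_i ≤ q` and `f (c'_i) = c_i` for all `i`
(this is expressed by the `IsGreatest` hypothesis).  Then `maxc` satisfies the
recurrence: writing `M q` for the maximum of `maxc v` over all `v < q` (`0` if there
is no such `v`), if `M q = j - 1` for some `1 ≤ j ≤ p` with `f q = c_j` then
`maxc q = j`, and otherwise `maxc q = M q`.  Consequently, there is a chain
`(c'_1, …, c'_p)` in `Q` with `f (c'_i) = c_i` for all `i` iff `maxc q = p` for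
some element `q` of `Q`. -/
theorem maxc_recurrence {P Q : Type*} [PartialOrder P]
    [Fintype Q] [PartialOrder Q] [DecidableEq Q]
    [DecidableRel ((· < ·) : Q → Q → Prop)]
    (f : Q → Option P) (c : List P) (hc : IsPosetChain c) (hne : c ≠ [])
    (maxc : Q → ℕ)
    (hmaxc : ∀ q : Q, IsGreatest
      {j : ℕ | ∃ c' : List Q, IsPosetChain c' ∧ c'.length = j ∧
        (∀ x ∈ c', x ≤ q) ∧ c'.map f = (c.take j).map some}
      (maxc q)) :
    (∀ q : Q, ∀ j : ℕ, 1 ≤ j → j ≤ c.length →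
        (Finset.univ.filter (fun v : Q => v < q)).sup maxc = j - 1 →
        f q = (c)[j - 1]? →
        maxc q = j)
    ∧ (∀ q : Q,
        (¬ ∃ j : ℕ, 1 ≤ j ∧ j ≤ c.length ∧
            (Finset.univ.filter (fun v : Q => v < q)).sup maxc = j - 1 ∧
            f q = (c)[j - 1]?) →
        maxc q = (Finset.univ.filter (fun v : Q => v < q)).sup maxc)
    ∧ ((∃ c' : List Q, IsPosetChain c' ∧ c'.map f = c.map some)
        ↔ ∃ q : Q, maxc q = c.length) := by
  classical
  -- upper bound: maxc q ≤ c.length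
  have hub : ∀ q : Q, maxc q ≤ c.length := by
    intro q
    obtain ⟨c', _, hlen, _, hmap⟩ := (hmaxc q).1
    have h := congrArg List.length hmap
    simp [hlen] at h
    omega
  -- monotonicity
  have hmono : ∀ v q : Q, v < q → maxc v ≤ maxc q := by
    intro v q hvq
    apply (hmaxc q).2
    obtain ⟨c', h1, h2, h3, h4⟩ := (hmaxc v).1
    exact ⟨c', h1, h2, fun x hx => (h3 x hx).trans hvq.le, h4⟩
  have hMle : ∀ q : Q, (Finset.univ.filter (fun v : Q => v < q)).sup maxc ≤ maxc q := by
    intro q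
    apply Finset.sup_le
    intro v hv
    simp only [Finset.mem_filter, Finset.mem_univ, true_and] at hv
    exact hmono v q hv
  -- key step lemma
  have hB : ∀ q : Q,
      maxc q ≤ (Finset.univ.filter (fun v : Q => v < q)).sup maxc + 1 ∧
      (maxc q = (Finset.univ.filter (fun v : Q => v < q)).sup maxc + 1 →
        f q = (c)[(Finset.univ.filter (fun v : Q => v < q)).sup maxc]?) := by
    intro q
    set s := (Finset.univ.filter (fun v : Q => v < q)).sup maxc with hs
    obtain ⟨c', hch, hlen, hle, hmap⟩ := (hmaxc q).1
    rcases c'.eq_nil_or_concat with rfl | ⟨l, x, hcx⟩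
    · simp only [List.length_nil] at hlen
      exact ⟨by omega, by omega⟩
    · rw [List.concat_eq_append] at hcx
      subst hcx
      have hxq : x ≤ q := hle x (by simp)
      have hpw : (l ++ [x]).Pairwise (· < ·) := List.isChain_iff_pairwise.mp hch
      have hlx : ∀ y ∈ l, y < x := fun y hy =>
        (List.pairwise_append.mp hpw).2.2 y hy x (by simp)
      rcases eq_or_lt_of_le hxq with rfl | hlt
      · -- last element is q itself
        have hmlen : maxc x = l.length + 1 := by
          simpa using hlen.symm
        have hmlec : maxc x ≤ c.length := hub x
        have hfq : f x = (c)[l.length]? := by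
          have h := congrArg (fun t => t[l.length]?) hmap
          simp only [List.map_append, List.map_cons, List.map_nil] at h
          rw [show l.map f ++ [f x] = (l.map f) ++ [f x] from rfl] at h
          have h1 : (l.map f ++ [f x])[(l.map f).length]? = some (f x) :=
            List.getElem?_concat_length
          rw [List.length_map] at h1
          rw [h1] at h
          have h2 : ((c.take (maxc x)).map some)[l.length]?
              = ((c.take (maxc x))[l.length]?).map some := List.getElem?_map
          rw [h2, List.getElem?_take_of_lt (by omega)] at h
          have ha := List.getElem?_eq_getElem (show l.length < c.length by omega)
          rw [ha] at h ⊢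
          simpa using h
        have hsl : l.length ≤ s := by
          rcases l.eq_nil_or_concat with rfl | ⟨l', v, hlv⟩
          · simp
          · rw [List.concat_eq_append] at hlv
            subst hlv
            have hvq : v < x := hlx v (by simp)
            have hlmap : (l' ++ [v]).map f = (c.take (l' ++ [v]).length).map some := by
              have h := congrArg (fun t => t.take (l' ++ [v]).length) hmap
              rw [List.map_append] at h
              rw [show ((l' ++ [v]).map f ++ [x].map f).take (l' ++ [v]).length
                  = ((l' ++ [v]).map f ++ [x].map f).take ((l' ++ [v]).map f).length
                  from by rw [List.length_map], List.take_left] at h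
              rw [h, ← List.map_take, List.take_take]
              congr 2
              simp only [List.length_append, List.length_singleton] at hmlen ⊢
              omega
            have hm : (l' ++ [v]).length ≤ maxc v := by
              apply (hmaxc v).2
              refine ⟨l' ++ [v], ?_, rfl, ?_, hlmap⟩
              · exact List.isChain_iff_pairwise.mpr (List.pairwise_append.mp hpw).1
              · intro y hy
                rcases List.mem_append.mp hy with hy | hy
                · exact ((List.pairwise_append.mp (List.pairwise_append.mp hpw).1).2.2
                    y hy v (by simp)).le
                · simp only [List.mem_singleton] at hy; subst hy; exact le_rfl
            have hvs : maxc v ≤ s := Finset.le_sup (by simp [hvq])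
            simpa using hm.trans hvs
        refine ⟨by omega, fun h => ?_⟩
        have : s = l.length := by omega
        rw [this]; exact hfq
      · -- last element strictly below q
        have hmx : maxc x ≤ maxc q := hmono x q hlt
        have hm : maxc q ≤ maxc x := by
          apply (hmaxc x).2
          refine ⟨l ++ [x], hch, hlen, ?_, hmap⟩
          intro y hy
          rcases List.mem_append.mp hy with hy | hy
          · exact (hlx y hy).le
          · simp only [List.mem_singleton] at hy; subst hy; exact le_rfl
        have hxs : maxc x ≤ s := Finset.le_sup (by simp [hlt])
        exact ⟨by omega, by omega⟩
  refine ⟨?_, ?_, ?_⟩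
  · -- recurrence, hit case
    intro q j hj1 hjlen hsup hfq
    have hexl : ∃ l : List Q, l.Pairwise (· < ·) ∧ l.length = j - 1 ∧
        (∀ x ∈ l, x < q) ∧ l.map f = (c.take (j - 1)).map some := by
      by_cases h0 : j - 1 = 0
      · exact ⟨[], by simp, by simpa using h0.symm, by simp, by simp [h0]⟩
      · have hne' : (Finset.univ.filter (fun v : Q => v < q)).Nonempty := by
          by_contra hcon
          rw [Finset.not_nonempty_iff_eq_empty] at hcon
          rw [hcon] at hsup
          simp at hsup
          omega
        obtain ⟨v, hvmem, hveq⟩ := Finset.exists_mem_eq_sup _ hne' maxc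
        have hvq : v < q := by simpa using hvmem
        have hv : maxc v = j - 1 := by omega
        obtain ⟨l, h1, h2, h3, h4⟩ := (hmaxc v).1
        refine ⟨l, List.isChain_iff_pairwise.mp h1, by omega,
          fun x hx => lt_of_le_of_lt (h3 x hx) hvq, ?_⟩
        rw [h4, hv]
    obtain ⟨l, hl1, hl2, hl3, hl4⟩ := hexl
    have hmem : j ∈ {j : ℕ | ∃ c' : List Q, IsPosetChain c' ∧ c'.length = j ∧
        (∀ x ∈ c', x ≤ q) ∧ c'.map f = (c.take j).map some} := by
      refine ⟨l ++ [q], ?_, by simp [hl2]; omega, ?_, ?_⟩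
      · apply List.isChain_iff_pairwise.mpr
        apply List.pairwise_append.mpr
        exact ⟨hl1, by simp, fun y hy x hx => by simp at hx; subst hx; exact hl3 y hy⟩
      · intro y hy
        rcases List.mem_append.mp hy with hy | hy
        · exact (hl3 y hy).le
        · simp only [List.mem_singleton] at hy; subst hy; exact le_rfl
      · rw [List.map_append, hl4, show j = (j - 1) + 1 from by omega, List.take_succ,
          List.map_append]
        congr 1
        have hjc : j - 1 < c.length := by omega
        have ha := List.getElem?_eq_getElem hjc
        simp [hfq, ha]
    have h1 : j ≤ maxc q := (hmaxc q).2 hmem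
    have h2 : maxc q ≤ j := by
      have := (hB q).1
      omega
    omega
  · -- recurrence, miss case
    intro q hnot
    refine le_antisymm ?_ (hMle q)
    by_contra hgt
    push_neg at hgt
    have h1 := (hB q).1
    have heq : maxc q = (Finset.univ.filter (fun v : Q => v < q)).sup maxc + 1 := by omega
    have h2 := (hB q).2 heq
    exact hnot ⟨maxc q, by omega, hub q, by omega, by
      rw [show maxc q - 1 = (Finset.univ.filter (fun v : Q => v < q)).sup maxc from by omega]
      exact h2⟩
  · -- final equivalence
    constructor
    · rintro ⟨c', h1, h2⟩
      have hclen : c'.length = c.length := by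
        have := congrArg List.length h2; simpa using this
      have hc'ne : c' ≠ [] := by
        intro h; subst h
        simp only [List.map_nil] at h2
        exact hne (by simpa using h2.symm)
      obtain ⟨l, x, hcx⟩ := c'.eq_nil_or_concat.resolve_left hc'ne
      rw [List.concat_eq_append] at hcx
      subst hcx
      refine ⟨x, le_antisymm (hub x) ?_⟩
      apply (hmaxc x).2
      refine ⟨l ++ [x], h1, hclen, ?_, by rw [h2, List.take_length]⟩
      intro y hy
      rcases List.mem_append.mp hy with hy | hy
      · exact ((List.pairwise_append.mp (List.isChain_iff_pairwise.mp h1)).2.2 y hy x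
          (by simp)).le
      · simp only [List.mem_singleton] at hy; subst hy; exact le_rfl
    · rintro ⟨q, hq⟩
      obtain ⟨c', h1, h2, h3, h4⟩ := (hmaxc q).1
      rw [hq, List.take_length] at h4
      exact ⟨c', h1, h4⟩
end
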